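/- Let f : ℂ → ℂ be continuous on the closed lower half plane, analytic on the open lower half plane, and satisfy |f(z)| ≤ C·e^{-c|z|} there for constants C, c > 0. Then for every real w with 0 < w < c/2, ∫_ℝ f(k)·e^{-iwk} dk = 0. -/

import Mathlib

open Complex MeasureTheory

/-- If `f` is analytic on the open lower half plane, continuous on the closed lower half
plane, and `|f(z)| ≤ C e^{-c|z|}` there, then `∫ f(k) e^{-iwk} dk = 0` for `0 < w < c/2`. -/
theorem stmt16 (f : ℂ → ℂ) (C c : ℝ) (hC : 0 < C) (hc : 0 < c)
    (hcont : ContinuousOn f {z : ℂ | z.im ≤ 0})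
    (hdiff : DifferentiableOn ℂ f {z : ℂ | z.im < 0})
    (hdecay : ∀ z : ℂ, z.im ≤ 0 → ‖f z‖ ≤ C * Real.exp (-c * ‖z‖)) :
    ∀ w : ℝ, 0 < w → w < c / 2 →
      ∫ k : ℝ, f (k : ℂ) * Complex.exp (-(Complex.I * w * k)) = 0 := by
  intro w hw _hw2
  set g : ℂ → ℂ := fun z => f z * Complex.exp (-(Complex.I * w * z)) with hgdef
  -- the exponential factor has norm ≤ 1 on the lower half plane
  have hgb : ∀ z : ℂ, z.im ≤ 0 → ‖g z‖ ≤ C * Real.exp (-c * ‖z‖) := by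
    intro z hz
    have h1 : ‖Complex.exp (-(Complex.I * w * z))‖ ≤ 1 := by
      rw [Complex.norm_exp]
      have : (-(Complex.I * w * z)).re = w * z.im := by
        simp [Complex.mul_re, Complex.mul_im]
      rw [this]
      exact Real.exp_le_one_iff.mpr (mul_nonpos_of_nonneg_of_nonpos hw.le hz)
    calc ‖g z‖ = ‖f z‖ * ‖Complex.exp (-(Complex.I * w * z))‖ := norm_mul _ _
      _ ≤ (C * Real.exp (-c * ‖z‖)) * 1 :=
        mul_le_mul (hdecay z hz) h1 (norm_nonneg _) (by positivity)
      _ = C * Real.exp (-c * ‖z‖) := mul_one _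
  -- continuity of g on the closed lower half plane
  have hgcont : ContinuousOn g {z : ℂ | z.im ≤ 0} := by
    apply hcont.mul
    exact (Complex.continuous_exp.comp (by continuity)).continuousOn
  have hgdiff : DifferentiableOn ℂ g {z : ℂ | z.im < 0} := by
    apply hdiff.mul
    exact (Complex.differentiable_exp.comp (by fun_prop)).differentiableOn
  -- integrability of x ↦ g x on ℝ
  have hmeas : Continuous fun x : ℝ => g (x : ℂ) := by
    apply Continuous.mul
    · exact hcont.comp_continuous Complex.continuous_ofReal (fun x => by simp)
    · exact Complex.continuous_exp.comp (by continuity)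
  have hmajor : Integrable (fun x : ℝ => Real.exp (-c * |x|)) := by
    apply LocallyIntegrable.integrable_of_isBigO_atTop_of_norm_isNegInvariant
      (g := fun x : ℝ => Real.exp (-c * x))
    · exact (Real.continuous_exp.comp (by continuity)).locallyIntegrable
    · filter_upwards with x
      simp [Function.comp, abs_neg]
    · apply Asymptotics.IsBigO.of_bound 1
      filter_upwards [Filter.eventually_ge_atTop (0 : ℝ)] with x hx
      rw [Real.norm_eq_abs, Real.norm_eq_abs, Real.abs_exp, Real.abs_exp, _root_.abs_of_nonneg hx]
      simp
    · exact ⟨Set.Ioi 0, Filter.Ioi_mem_atTop 0, exp_neg_integrableOn_Ioi 0 hc⟩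
  have hgint : Integrable (fun x : ℝ => g (x : ℂ)) := by
    apply Integrable.mono' (hmajor.const_mul C) hmeas.aestronglyMeasurable
    filter_upwards with x
    calc ‖g (x : ℂ)‖ ≤ C * Real.exp (-c * ‖(x : ℂ)‖) := hgb _ (by simp)
      _ = C * Real.exp (-c * |x|) := by rw [Complex.norm_real, Real.norm_eq_abs]
  -- the rectangle contour estimate
  have key : ∀ R : ℝ, 0 ≤ R → ‖∫ x in (-R)..R, g x‖ ≤ 4 * C * R * Real.exp (-c * R) := by
    intro R hR
    have hb : C * Real.exp (-c * R) ≥ 0 := by positivity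
    -- rectangle with corners -R - R I and R
    have hrect := Complex.integral_boundary_rect_eq_zero_of_continuousOn_of_differentiableOn g
      (-R - R * Complex.I) (R : ℂ) ?_ ?_
    · have hre1 : ((-R : ℂ) - R * Complex.I).re = -R := by simp
      have him1 : ((-R : ℂ) - R * Complex.I).im = -R := by simp
      have hre2 : ((R : ℂ)).re = R := by simp
      have him2 : ((R : ℂ)).im = 0 := by simp
      rw [hre1, him1, hre2, him2] at hrect
      have heq : (∫ x : ℝ in (-R)..R, g x) =
          (∫ x : ℝ in (-R)..R, g (x + (-R : ℝ) * Complex.I))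
          + Complex.I • (∫ y : ℝ in (-R)..0, g (R + y * Complex.I))
          - Complex.I • (∫ y : ℝ in (-R)..0, g (-R + y * Complex.I)) := by
        have : (∫ x : ℝ in (-R)..R, g (x + (0 : ℝ) * Complex.I)) = ∫ x : ℝ in (-R)..R, g x := by
          congr 1; ext x; norm_num
        rw [this] at hrect
        simp only [smul_eq_mul] at hrect ⊢
        push_cast at hrect ⊢
        linear_combination -hrect
      rw [heq]
      have hbot : ‖∫ x : ℝ in (-R)..R, g (x + (-R : ℝ) * Complex.I)‖
          ≤ (C * Real.exp (-c * R)) * |R - (-R)| := by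
        apply intervalIntegral.norm_integral_le_of_norm_le_const
        intro x hx
        have hz : ((x : ℂ) + (-R : ℝ) * Complex.I).im = -R := by simp
        have hnorm : R ≤ ‖(x : ℂ) + (-R : ℝ) * Complex.I‖ := by
          have := Complex.abs_im_le_norm ((x : ℂ) + (-R : ℝ) * Complex.I)
          rw [hz] at this
          rwa [abs_neg, _root_.abs_of_nonneg hR] at this
        refine (hgb _ (by rw [hz]; linarith)).trans ?_
        exact mul_le_mul_of_nonneg_left (Real.exp_le_exp.mpr (by nlinarith)) hC.le
      have hright : ‖∫ y : ℝ in (-R)..0, g ((R : ℝ) + y * Complex.I)‖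
          ≤ (C * Real.exp (-c * R)) * |0 - (-R)| := by
        apply intervalIntegral.norm_integral_le_of_norm_le_const
        intro y hy
        rw [Set.uIoc_of_le (by linarith : -R ≤ (0:ℝ))] at hy
        have hz : (((R : ℝ) : ℂ) + y * Complex.I).im = y := by simp
        have hnorm : R ≤ ‖((R : ℝ) : ℂ) + y * Complex.I‖ := by
          have := Complex.abs_re_le_norm (((R : ℝ) : ℂ) + y * Complex.I)
          simp only [Complex.add_re, Complex.ofReal_re, Complex.mul_re, Complex.I_re,
            Complex.I_im, Complex.ofReal_im] at this
          calc R = |R| := (_root_.abs_of_nonneg hR).symm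
            _ = |(R + (y * 0 - 0 * 1))| := by ring_nf
            _ ≤ _ := this
        refine (hgb _ (by rw [hz]; exact hy.2)).trans ?_
        exact mul_le_mul_of_nonneg_left (Real.exp_le_exp.mpr (by nlinarith)) hC.le
      have hleft : ‖∫ y : ℝ in (-R)..0, g ((-R : ℝ) + y * Complex.I)‖
          ≤ (C * Real.exp (-c * R)) * |0 - (-R)| := by
        apply intervalIntegral.norm_integral_le_of_norm_le_const
        intro y hy
        rw [Set.uIoc_of_le (by linarith : -R ≤ (0:ℝ))] at hy
        have hz : (((-R : ℝ) : ℂ) + y * Complex.I).im = y := by simp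
        have hnorm : R ≤ ‖((-R : ℝ) : ℂ) + y * Complex.I‖ := by
          have := Complex.abs_re_le_norm (((-R : ℝ) : ℂ) + y * Complex.I)
          simp only [Complex.add_re, Complex.ofReal_re, Complex.mul_re, Complex.I_re,
            Complex.I_im, Complex.ofReal_im] at this
          calc R = |(-R + (y * 0 - 0 * 1))| := by rw [_root_.abs_of_nonpos (by linarith)]; ring
            _ ≤ _ := this
        refine (hgb _ (by rw [hz]; exact hy.2)).trans ?_
        exact mul_le_mul_of_nonneg_left (Real.exp_le_exp.mpr (by nlinarith)) hC.le
      have habs : |R - (-R)| = 2 * R := by rw [_root_.abs_of_nonneg (by linarith)]; ring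
      have habs2 : |(0 : ℝ) - (-R)| = R := by rw [_root_.abs_of_nonneg (by linarith)]; ring
      rw [habs] at hbot
      rw [habs2] at hright hleft
      push_cast at hleft
      calc ‖(∫ x : ℝ in (-R)..R, g (x + (-R : ℝ) * Complex.I))
          + Complex.I • (∫ y : ℝ in (-R)..0, g (R + y * Complex.I))
          - Complex.I • (∫ y : ℝ in (-R)..0, g (-R + y * Complex.I))‖
          ≤ ‖(∫ x : ℝ in (-R)..R, g (x + (-R : ℝ) * Complex.I))
            + Complex.I • (∫ y : ℝ in (-R)..0, g (R + y * Complex.I))‖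
            + ‖Complex.I • (∫ y : ℝ in (-R)..0, g (-R + y * Complex.I))‖ := norm_sub_le _ _
        _ ≤ (‖(∫ x : ℝ in (-R)..R, g (x + (-R : ℝ) * Complex.I))‖
            + ‖Complex.I • (∫ y : ℝ in (-R)..0, g (R + y * Complex.I))‖)
            + ‖Complex.I • (∫ y : ℝ in (-R)..0, g (-R + y * Complex.I))‖ := by
              gcongr; exact norm_add_le _ _
        _ ≤ ((C * Real.exp (-c * R)) * (2 * R) + (C * Real.exp (-c * R)) * R)
            + (C * Real.exp (-c * R)) * R := by
              gcongr
              · rwa [norm_smul, Complex.norm_I, one_mul]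
              · rwa [norm_smul, Complex.norm_I, one_mul]
        _ = 4 * C * R * Real.exp (-c * R) := by ring
    · -- continuity on the closed rectangle
      apply hgcont.mono
      intro z hz
      rw [Complex.mem_reProdIm] at hz
      have := hz.2
      simp only [Complex.sub_im, Complex.neg_im, Complex.ofReal_im, Complex.mul_im,
        Complex.ofReal_re, Complex.I_im, Complex.I_re] at this
      have h0 : z.im ∈ Set.uIcc (-R) 0 := by
        convert this using 2 <;> simp
      rw [Set.uIcc_of_le (by linarith : -R ≤ (0:ℝ))] at h0
      exact h0.2
    · -- differentiability on the open rectangle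
      apply hgdiff.mono
      intro z hz
      rw [Complex.mem_reProdIm] at hz
      have := hz.2
      have hmin : min ((-R : ℂ) - R * Complex.I).im ((R : ℂ)).im = -R := by
        simp; linarith
      have hmax : max ((-R : ℂ) - R * Complex.I).im ((R : ℂ)).im = 0 := by
        simp; linarith
      rw [hmin, hmax] at this
      exact this.2
  -- the two limits
  have hT : Filter.Tendsto (fun R : ℝ => 4 * C * R * Real.exp (-c * R))
      Filter.atTop (nhds 0) := by
    have h1 : Filter.Tendsto (fun R : ℝ => c * R) Filter.atTop Filter.atTop :=
      Filter.Tendsto.const_mul_atTop hc Filter.tendsto_id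
    have h2 := (Real.tendsto_pow_mul_exp_neg_atTop_nhds_zero 1).comp h1
    have h3 := h2.const_mul (4 * C / c)
    rw [mul_zero] at h3
    refine h3.congr fun R => ?_
    simp only [Function.comp, pow_one]
    field_simp
  have hlim1 : Filter.Tendsto (fun R : ℝ => ∫ x in (-R)..R, g x)
      Filter.atTop (nhds (∫ x : ℝ, g x)) :=
    intervalIntegral_tendsto_integral hgint (Filter.tendsto_neg_atTop_atBot.comp Filter.tendsto_id) Filter.tendsto_id
  have hlim2 : Filter.Tendsto (fun R : ℝ => ∫ x in (-R)..R, g x)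
      Filter.atTop (nhds 0) := by
    apply squeeze_zero_norm' _ hT
    filter_upwards [Filter.eventually_ge_atTop (0 : ℝ)] with R hR
    exact key R hR
  exact tendsto_nhds_unique hlim1 hlim2
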